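/- For real numbers x_1,...,x_r in [0,1] with x_1 = min_i x_i, and nonnegative integers n_1,...,n_r not all zero, one has 1 - ∏_{t=1}^r (1-x_t)^{n_t} ≥ x_1 + ∑_{i=2}^r (x_i - x_1) · n_i · (1-x_i)^{n_i-1} · ∏_{t≠i} (1-x_t)^{n_t}. -/

import Mathlib

lemma pow_aux_stmt0 {b d : ℝ} (hb : 0 ≤ b) (hd : 0 ≤ d) (n : ℕ) :
    b ^ n + d * n * b ^ (n - 1) ≤ (b + d) ^ n := by
  induction n with
  | zero => simp
  | succ n ih =>
    have h2 : (b + d) * (b ^ n + d * n * b ^ (n - 1)) ≤ (b + d) * (b + d) ^ n :=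
      mul_le_mul_of_nonneg_left ih (by linarith)
    have h3 : d * n * b * b ^ (n - 1) = d * n * b ^ n := by
      cases n with
      | zero => simp
      | succ m =>
        have : (m + 1 : ℕ) - 1 = m := rfl
        rw [this, pow_succ]; ring
    have h4 : (0:ℝ) ≤ d * d * (n * b ^ (n - 1)) :=
      mul_nonneg (mul_nonneg hd hd)
        (mul_nonneg (Nat.cast_nonneg n) (pow_nonneg hb _))
    have h5 : (n + 1 : ℕ) - 1 = n := rfl
    rw [h5, pow_succ, pow_succ]
    push_cast
    nlinarith [h2, h3, h4]

lemma key_stmt0 {ι : Type*} [DecidableEq ι] (a : ℝ) (ha : 0 ≤ a)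
    (d : ι → ℝ) (n : ι → ℕ) (T : Finset ι) :
    (∀ i ∈ T, 0 ≤ d i) → (∀ i ∈ T, d i ≤ a) →
    ∏ t ∈ T, (a - d t) ^ n t +
      ∑ i ∈ T, d i * n i * (a - d i) ^ (n i - 1) * ∏ t ∈ T.erase i, (a - d t) ^ n t
      ≤ a ^ (∑ t ∈ T, n t) := by
  induction T using Finset.induction_on with
  | empty => simp
  | @insert u T hu ih =>
    intro hd hda
    have hdu : 0 ≤ d u := hd u (Finset.mem_insert_self u T)
    have hdua : d u ≤ a := hda u (Finset.mem_insert_self u T)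
    have hb : 0 ≤ a - d u := by linarith
    have ih' := ih (fun i hi => hd i (Finset.mem_insert_of_mem hi))
      (fun i hi => hda i (Finset.mem_insert_of_mem hi))
    have hP0 : (0:ℝ) ≤ ∏ t ∈ T, (a - d t) ^ n t :=
      Finset.prod_nonneg fun t ht => pow_nonneg (by linarith [hd t (Finset.mem_insert_of_mem ht), hda t (Finset.mem_insert_of_mem ht)]) _
    have hP : ∏ t ∈ T, (a - d t) ^ n t ≤ a ^ (∑ t ∈ T, n t) := by
      rw [← Finset.prod_pow_eq_pow_sum]
      apply Finset.prod_le_prod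
      · intro t ht
        exact pow_nonneg (by linarith [hda t (Finset.mem_insert_of_mem ht)]) _
      · intro t ht
        exact pow_le_pow_left₀ (by linarith [hda t (Finset.mem_insert_of_mem ht)])
          (by linarith [hd t (Finset.mem_insert_of_mem ht)]) _
    rw [Finset.prod_insert hu, Finset.sum_insert hu, Finset.sum_insert hu,
      Finset.erase_insert hu]
    have hsum : ∑ i ∈ T, d i * n i * (a - d i) ^ (n i - 1) *
        ∏ t ∈ (insert u T).erase i, (a - d t) ^ n t
        = (a - d u) ^ n u *
          ∑ i ∈ T, d i * n i * (a - d i) ^ (n i - 1) *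
            ∏ t ∈ T.erase i, (a - d t) ^ n t := by
      rw [Finset.mul_sum]
      apply Finset.sum_congr rfl
      intro i hi
      have hiu : u ≠ i := fun h => hu (h ▸ hi)
      rw [Finset.erase_insert_of_ne hiu,
        Finset.prod_insert (fun h => hu (Finset.mem_of_mem_erase h))]
      ring
    rw [hsum]
    have hS : 0 ≤ ∑ i ∈ T, d i * n i * (a - d i) ^ (n i - 1) *
        ∏ t ∈ T.erase i, (a - d t) ^ n t := by
      apply Finset.sum_nonneg
      intro i hi
      have h0 : 0 ≤ d i := hd i (Finset.mem_insert_of_mem hi)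
      have h1 : d i ≤ a := hda i (Finset.mem_insert_of_mem hi)
      have hprod : 0 ≤ ∏ t ∈ T.erase i, (a - d t) ^ n t := by
        apply Finset.prod_nonneg
        intro t ht
        have ht' := Finset.mem_of_mem_erase ht
        have := hda t (Finset.mem_insert_of_mem ht')
        exact pow_nonneg (by linarith) _
      exact mul_nonneg (mul_nonneg (mul_nonneg h0 (Nat.cast_nonneg _))
        (pow_nonneg (by linarith) _)) hprod
    have haux := pow_aux_stmt0 hb hdu (n u)
    have hbd : a - d u + d u = a := by ring
    rw [hbd] at haux
    have hN : (0:ℝ) ≤ a ^ (∑ t ∈ T, n t) := pow_nonneg ha _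
    calc (a - d u) ^ n u * ∏ t ∈ T, (a - d t) ^ n t +
          (d u * n u * (a - d u) ^ (n u - 1) * ∏ t ∈ T, (a - d t) ^ n t +
            (a - d u) ^ n u * ∑ i ∈ T, d i * n i * (a - d i) ^ (n i - 1) *
              ∏ t ∈ T.erase i, (a - d t) ^ n t)
        = (a - d u) ^ n u * (∏ t ∈ T, (a - d t) ^ n t +
            ∑ i ∈ T, d i * n i * (a - d i) ^ (n i - 1) *
              ∏ t ∈ T.erase i, (a - d t) ^ n t)
          + d u * n u * (a - d u) ^ (n u - 1) * ∏ t ∈ T, (a - d t) ^ n t := by ring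
      _ ≤ (a - d u) ^ n u * a ^ (∑ t ∈ T, n t)
          + d u * n u * (a - d u) ^ (n u - 1) * a ^ (∑ t ∈ T, n t) := by
          have t1 := mul_le_mul_of_nonneg_left ih' (pow_nonneg hb (n u))
          have hc : (0:ℝ) ≤ d u * (n u : ℝ) * (a - d u) ^ (n u - 1) :=
            mul_nonneg (mul_nonneg hdu (Nat.cast_nonneg (n u))) (pow_nonneg hb _)
          have t2 := mul_le_mul_of_nonneg_left hP hc
          linarith
      _ = ((a - d u) ^ n u + d u * n u * (a - d u) ^ (n u - 1)) * a ^ (∑ t ∈ T, n t) := by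
          ring
      _ ≤ a ^ n u * a ^ (∑ t ∈ T, n t) := mul_le_mul_of_nonneg_right haux hN
      _ = a ^ (n u + ∑ t ∈ T, n t) := (pow_add a _ _).symm

theorem stmt_0 (r : ℕ) (hr : 0 < r) (x : Fin r → ℝ) (n : Fin r → ℕ)
    (hx : ∀ i, x i ∈ Set.Icc (0 : ℝ) 1)
    (hmin : ∀ i, x ⟨0, hr⟩ ≤ x i)
    (hn : 1 ≤ ∑ t, n t) :
    x ⟨0, hr⟩ +
      ∑ i ∈ Finset.univ.erase ⟨0, hr⟩,
        (x i - x ⟨0, hr⟩) * (n i : ℝ) * (1 - x i) ^ (n i - 1) *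
          ∏ t ∈ Finset.univ.erase i, (1 - x t) ^ (n t)
      ≤ 1 - ∏ t, (1 - x t) ^ (n t) := by
  set p0 : Fin r := ⟨0, hr⟩ with hp0
  have h0 := hx p0
  have ha : (0:ℝ) ≤ 1 - x p0 := by linarith [h0.2]
  have hkey := key_stmt0 (1 - x p0) ha (fun i => x i - x p0) n Finset.univ
    (fun i _ => by show (0:ℝ) ≤ x i - x p0; linarith [hmin i])
    (fun i _ => by show x i - x p0 ≤ 1 - x p0; linarith [(hx i).2])
  have hsub : ∀ i : Fin r, (1 - x p0) - (x i - x p0) = 1 - x i := fun i => by ring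
  simp only [hsub] at hkey
  have hsplit : ∑ i ∈ Finset.univ, (x i - x p0) * (n i : ℝ) * (1 - x i) ^ (n i - 1) *
      ∏ t ∈ Finset.univ.erase i, (1 - x t) ^ n t
      = (x p0 - x p0) * (n p0 : ℝ) * (1 - x p0) ^ (n p0 - 1) *
          ∏ t ∈ Finset.univ.erase p0, (1 - x t) ^ n t
        + ∑ i ∈ Finset.univ.erase p0, (x i - x p0) * (n i : ℝ) * (1 - x i) ^ (n i - 1) *
            ∏ t ∈ Finset.univ.erase i, (1 - x t) ^ n t :=
    (Finset.add_sum_erase _ _ (Finset.mem_univ p0)).symm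
  rw [hsplit, sub_self, zero_mul, zero_mul, zero_mul, zero_add] at hkey
  have hpow : (1 - x p0) ^ (∑ t, n t) ≤ 1 - x p0 :=
    pow_le_of_le_one ha (by linarith [h0.1]) (by omega)
  linarith
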